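/- For integers n ≥ 2, define C_n = H_{n-1,1}^2/H_{n-1,2}. For every partition λ = (n_1, ..., n_m) of an integer n with all parts n_i ≥ 2, ∑_{i=1}^m C_{n_i} ≤ (121/196)·n. -/

import Mathlib

noncomputable def H (m j : ℕ) : ℝ := ∑ i ∈ Finset.Icc 1 m, (1 : ℝ) / (i : ℝ) ^ j

lemma H_range (m j : ℕ) : H m j = ∑ i ∈ Finset.range m, (1:ℝ) / ((i:ℝ)+1) ^ j := by
  rw [H]
  rw [show Finset.Icc 1 m = Finset.Ico 1 (m+1) by rw [Finset.Ico_add_one_right_eq_Icc]]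
  rw [Finset.sum_Ico_eq_sum_range]
  simp [add_comm]

lemma H_succ (m j : ℕ) : H (m+1) j = H m j + 1 / ((m:ℝ)+1)^j := by
  rw [H_range, H_range, Finset.sum_range_succ]

lemma le_sqrt' (a x : ℝ) (ha : 0 ≤ a) (h : a^2 ≤ x) : a ≤ Real.sqrt x := by
  have hx : (0:ℝ) ≤ x := le_trans (by positivity) h
  nlinarith [Real.sq_sqrt hx, Real.sqrt_nonneg x]

lemma H2_ge_one (m : ℕ) (hm : 1 ≤ m) : 1 ≤ H m 2 := by
  induction m with
  | zero => omega
  | succ k ih =>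
    rcases Nat.eq_zero_or_pos k with hk | hk
    · subst hk; norm_num [H_range, Finset.sum_range_succ]
    · have h1 := ih hk
      rw [H_succ]
      have h2 : (0:ℝ) ≤ 1/((k:ℝ)+1)^2 := by positivity
      linarith

lemma H1_le (m : ℕ) : H m 1 ≤ 1 + Real.sqrt m := by
  induction m with
  | zero => simp [H_range]
  | succ k ih =>
    rcases le_or_gt k 3 with hk | hk
    · rcases Nat.eq_zero_or_pos k with hk0 | hk0
      · subst hk0
        norm_num [H_range, Finset.sum_range_succ]
      · have hs : (13/12:ℝ) ≤ Real.sqrt ((k:ℕ)+1 : ℕ) := by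
          apply le_sqrt' _ _ (by norm_num)
          have : (1:ℝ) ≤ (k:ℝ) := by exact_mod_cast hk0
          push_cast
          nlinarith
        have hH : H (k+1) 1 ≤ 25/12 := by
          interval_cases k <;> norm_num [H_range, Finset.sum_range_succ]
        linarith
    · have hk4 : (4:ℝ) ≤ (k:ℝ) := by exact_mod_cast hk
      have h0 : (0:ℝ) ≤ (k:ℝ) := by positivity
      have hsq : Real.sqrt k ^ 2 = (k:ℝ) := Real.sq_sqrt h0
      have hsn : (0:ℝ) ≤ Real.sqrt k := Real.sqrt_nonneg _
      have h2s : (2:ℝ) ≤ Real.sqrt k := by nlinarith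
      have hkb : 2 * Real.sqrt k ≤ (k:ℝ) := by nlinarith
      have hkpos : (0:ℝ) < (k:ℝ)+1 := by linarith
      have h1 : (Real.sqrt k + 1/((k:ℝ)+1))^2 ≤ (k:ℝ)+1 := by
        have hu : ((k:ℝ)+1) * (1/((k:ℝ)+1)) = 1 := by field_simp
        have hupos : (0:ℝ) < 1/((k:ℝ)+1) := by positivity
        have hu1 : (1:ℝ)/((k:ℝ)+1) ≤ 1 := by
          rw [div_le_one hkpos]; linarith
        nlinarith [mul_nonneg (sub_nonneg.mpr hkb) hupos.le,
          mul_nonneg (sub_nonneg.mpr hu1) hupos.le]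
      have hs : Real.sqrt k + 1/((k:ℝ)+1) ≤ Real.sqrt ((k:ℝ)+1) :=
        le_sqrt' _ _ (by positivity) h1
      rw [H_succ, pow_one]
      push_cast
      linarith [ih]

lemma claim (m : ℕ) (hm : 1 ≤ m) : H m 1 ^ 2 ≤ (121/196) * ((m:ℝ)+1) * H m 2 := by
  induction m with
  | zero => omega
  | succ k ih =>
    rcases le_or_gt k 14 with hk | hk
    · interval_cases k <;> norm_num [H_range, Finset.sum_range_succ]
    · have hk1 : 1 ≤ k := by omega
      have ihk := ih hk1
      have h2 := H2_ge_one k hk1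
      have h1 := H1_le k
      have hk15 : (15:ℝ) ≤ (k:ℝ) := by exact_mod_cast hk
      have h0 : (0:ℝ) ≤ (k:ℝ) := by positivity
      have hsq : Real.sqrt k ^ 2 = (k:ℝ) := Real.sq_sqrt h0
      have hsn : (0:ℝ) ≤ Real.sqrt k := Real.sqrt_nonneg _
      have hts : (15:ℝ)/4 ≤ Real.sqrt k := by nlinarith
      have hH1nn : 0 ≤ H k 1 := by
        rw [H_range]
        apply Finset.sum_nonneg
        intro i _
        positivity
      rw [H_succ, H_succ, pow_one]
      push_cast
      set s := Real.sqrt k with hsdef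
      set A := H k 1 with hA
      set B := H k 2 with hB
      set v : ℝ := (k:ℝ)+1 with hv
      have hvpos : (0:ℝ) < v := by rw [hv]; linarith
      have hvs : v = s^2 + 1 := by rw [hv, hsq]
      clear_value s A B v
      have t1 : v^2 * A^2 ≤ (121/196) * v^3 * B := by
        have := mul_le_mul_of_nonneg_left ihk (sq_nonneg v)
        nlinarith [this]
      have t2 : (121/196)*v^2 ≤ (121/196)*v^2*B := by nlinarith [sq_nonneg v]
      have t3 : 2*v*A ≤ 2*v*(1+s) := by nlinarith
      have hts' : (0:ℝ) ≤ s - 15/4 := by linarith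
      have key2 : 2*(1+s)*v + 1 ≤ (121/196)*v^2 + (121/196)*(v+1) := by
        have q1 : (0:ℝ) ≤ s - 15/4 := hts'
        have q2 : (0:ℝ) ≤ (s - 15/4)^2 := sq_nonneg _
        have q3 : (0:ℝ) ≤ (s - 15/4)^3 := by positivity
        have q4 : (0:ℝ) ≤ (s - 15/4)^4 := by positivity
        rw [hvs]
        linarith [q1, q2, q3, q4]
      have main : (v*A+1)^2 ≤ (121/196)*(v+1)*(v^2*B+1) := by linarith [t1, t2, t3, key2]
      have e1 : (A + 1/v)^2 = (v*A+1)^2 / v^2 := by field_simp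
      have e2 : (121/196)*(v+1)*(B + 1/v^2) = (121/196)*(v+1)*(v^2*B+1) / v^2 := by
        field_simp
      calc (A + 1/v)^2 = (v*A+1)^2 / v^2 := e1
        _ ≤ (121/196)*(v+1)*(v^2*B+1) / v^2 := by
            gcongr
        _ = (121/196)*(v+1)*(B + 1/v^2) := e2.symm

lemma C_key (n : ℕ) (hn : 2 ≤ n) :
    (H (n-1) 1)^2 / H (n-1) 2 ≤ (121/196 : ℝ) * n := by
  obtain ⟨m, rfl⟩ : ∃ m, n = m + 1 := ⟨n - 1, by omega⟩
  have hm : 1 ≤ m := by omega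
  have h2 := H2_ge_one m hm
  have hcl := claim m hm
  have hpos : (0:ℝ) < H m 2 := by linarith
  simp only [Nat.add_sub_cancel]
  rw [div_le_iff₀ hpos]
  push_cast
  nlinarith [hcl]

noncomputable def C (n : ℕ) : ℝ := (H (n - 1) 1) ^ 2 / H (n - 1) 2

lemma C_le (n : ℕ) (hn : 2 ≤ n) : C n ≤ (121/196 : ℝ) * n := by
  rw [C]
  exact C_key n hn

theorem sum_C_le_bound (l : Multiset ℕ) (hl : ∀ x ∈ l, 2 ≤ x) :
    (l.map C).sum ≤ (121 / 196 : ℝ) * l.sum := by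
  induction l using Multiset.induction_on with
  | empty => simp
  | cons a s ih =>
    have ha := C_le a (hl a (Multiset.mem_cons_self a s))
    have hs := ih (fun x hx => hl x (Multiset.mem_cons_of_mem hx))
    simp only [Multiset.map_cons, Multiset.sum_cons]
    rw [Nat.cast_add, mul_add]
    linarith
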